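/- Let {A_i}_{i∈E} satisfy the Fano-non-Fano condition, each with support of cardinality q, and let U be a random variable with cardinality at most q. Then the conjunction [A_1 ≤ι A_2U ∧ A_2 ≤ι A_1U ∧ A_3 ≤ι A_123U] holds if and only if U ≐ A_12 (i.e., U ≤ι A_12 and A_12 ≤ι U). -/

import Mathlib

open scoped Classical

noncomputable section

/-- The probability of the event `S` under the probability mass function `p`. -/
def Pr {Ω : Type} (p : Ω → ℝ) (S : Set Ω) : ℝ := ∑' ω : S, p ω

/-- `p` is a probability mass function on the sample space `Ω`. -/
def IsProb {Ω : Type} (p : Ω → ℝ) : Prop := (∀ ω, 0 ≤ p ω) ∧ Pr p Set.univ = 1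

/-- The support of a random variable `X`: the set of values attained with positive
probability. -/
def supp {Ω α : Type} (p : Ω → ℝ) (X : Ω → α) : Set α := {a | 0 < Pr p {ω | X ω = a}}

/-- `X` is almost surely a function of `Y` (written `X ≤ι Y` in the paper). -/
def FuncOf {Ω α β : Type} (p : Ω → ℝ) (X : Ω → α) (Y : Ω → β) : Prop :=
  ∃ f : β → α, Pr p {ω | X ω = f (Y ω)} = 1

/-- The random variables `X` and `Y` are independent. -/
def IndepRV {Ω α β : Type} (p : Ω → ℝ) (X : Ω → α) (Y : Ω → β) : Prop :=
  ∀ (a : α) (b : β), Pr p {ω | X ω = a ∧ Y ω = b} = Pr p {ω | X ω = a} * Pr p {ω | Y ω = b}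

/-- The random variables `X`, `Y`, `Z` are mutually independent:
`X ⟂ Y` and `(X, Y) ⟂ Z`. -/
def Indep3 {Ω α β γ : Type} (p : Ω → ℝ) (X : Ω → α) (Y : Ω → β) (Z : Ω → γ) : Prop :=
  IndepRV p X Y ∧ IndepRV p (fun ω => (X ω, Y ω)) Z

/-- The predicate `tri(X, Y, Z)`: each variable is a.s. a function of the other two, and the
three variables are pairwise independent. -/
def tri {Ω α β γ : Type} (p : Ω → ℝ) (X : Ω → α) (Y : Ω → β) (Z : Ω → γ) : Prop :=
  FuncOf p X (fun ω => (Y ω, Z ω)) ∧ FuncOf p Y (fun ω => (X ω, Z ω)) ∧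
    FuncOf p Z (fun ω => (X ω, Y ω)) ∧
    IndepRV p X Y ∧ IndepRV p X Z ∧ IndepRV p Y Z

/- The ground set `E = {1,2,3,12,13,23,123}` is represented by `Fin 7`, where
`0 ↦ 1`, `1 ↦ 2`, `2 ↦ 3`, `3 ↦ 12`, `4 ↦ 13`, `5 ↦ 23`, `6 ↦ 123`. -/

/-- `{i,j,k}` is one of the dependent 3-sets of the non-Fano matroid, i.e. one of
`{1,2,12}, {1,3,13}, {2,3,23}, {1,23,123}, {2,13,123}, {3,12,123}`. -/
def inDN (i j k : Fin 7) : Prop :=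
  ({i, j, k} : Finset (Fin 7)) ∈
    ({{0, 1, 3}, {0, 2, 4}, {1, 2, 5}, {0, 5, 6}, {1, 4, 6}, {2, 3, 6}} :
      Finset (Finset (Fin 7)))

/-- `{i,j,k}` is a dependent 3-set of the Fano matroid (`D_F = D_N ∪ {{12,13,23}}`). -/
def inDF (i j k : Fin 7) : Prop :=
  inDN i j k ∨ ({i, j, k} : Finset (Fin 7)) = {3, 4, 5}

/-- `{i,j,k}` is an independent 3-set of the Fano matroid: a 3-element subset of `E`
not in `D_F`. -/
def inIF (i j k : Fin 7) : Prop :=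
  ({i, j, k} : Finset (Fin 7)).card = 3 ∧ ¬ inDF i j k

/-- The Fano-non-Fano condition on the seven random variables `A 0, …, A 6`
(representing `A_1, A_2, A_3, A_12, A_13, A_23, A_123`): `tri` holds for every triple in
`D_N`, and mutual independence holds for every triple in `I_F`. -/
def fnf {Ω : Type} (p : Ω → ℝ) {α : Fin 7 → Type} (A : ∀ i, Ω → α i) : Prop :=
  (∀ i j k, inDN i j k → tri p (A i) (A j) (A k)) ∧
  (∀ i j k, inIF i j k → Indep3 p (A i) (A j) (A k))

section Infra
variable {Ω : Type} {p : Ω → ℝ}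

lemma pr_ind (S : Set Ω) : Pr p S = ∑' ω, S.indicator p ω := tsum_subtype S p

lemma IsProb.summable (hp : IsProb p) : Summable p := by
  by_contra h
  have h1 : Pr p Set.univ = 0 := by
    rw [pr_ind, Set.indicator_univ, tsum_eq_zero_of_not_summable h]
  rw [hp.2] at h1; norm_num at h1

lemma pr_nonneg (hp : IsProb p) (S : Set Ω) : 0 ≤ Pr p S := by
  rw [pr_ind]; exact tsum_nonneg fun ω => Set.indicator_nonneg (fun ω _ => hp.1 ω) ω

lemma pr_union (hp : IsProb p) {S T : Set Ω} (h : Disjoint S T) :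
    Pr p (S ∪ T) = Pr p S + Pr p T := by
  rw [pr_ind, pr_ind, pr_ind, ← Summable.tsum_add (hp.summable.indicator S) (hp.summable.indicator T)]
  exact tsum_congr fun ω => by rw [Set.indicator_union_of_disjoint h]

lemma pr_compl (hp : IsProb p) (S : Set Ω) : Pr p S + Pr p Sᶜ = 1 := by
  rw [← pr_union hp disjoint_compl_right, Set.union_compl_self, hp.2]

lemma pr_eq_zero (hp : IsProb p) {S : Set Ω} (h : ∀ ω ∈ S, p ω = 0) : Pr p S = 0 := by
  rw [pr_ind]
  convert tsum_zero with ω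
  by_cases hω : ω ∈ S
  · simp [Set.indicator_of_mem hω, h ω hω]
  · simp [Set.indicator_of_notMem hω]

lemma pr_pos_iff (hp : IsProb p) {S : Set Ω} : 0 < Pr p S ↔ ∃ ω ∈ S, 0 < p ω := by
  constructor
  · intro h
    by_contra hc
    push_neg at hc
    have : Pr p S = 0 := pr_eq_zero hp fun ω hω => le_antisymm (hc ω hω) (hp.1 ω)
    rw [this] at h; exact lt_irrefl 0 h
  · rintro ⟨ω, hωS, hω⟩
    have h1 : p ω ≤ Pr p S := by
      rw [pr_ind]
      have := Summable.le_tsum (hp.summable.indicator S) ω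
        (fun j _ => Set.indicator_nonneg (fun ω _ => hp.1 ω) j)
      rwa [Set.indicator_of_mem hωS] at this
    linarith

lemma pr_one_iff (hp : IsProb p) {S : Set Ω} : Pr p S = 1 ↔ ∀ ω, 0 < p ω → ω ∈ S := by
  have hc := pr_compl hp S
  constructor
  · intro h ω hω
    by_contra hωS
    have : 0 < Pr p Sᶜ := (pr_pos_iff hp).2 ⟨ω, hωS, hω⟩
    linarith [pr_nonneg hp S]
  · intro h
    have : Pr p Sᶜ = 0 := pr_eq_zero hp fun ω hω => by
      by_contra hne
      exact hω (h ω (lt_of_le_of_ne (hp.1 ω) (Ne.symm hne)))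
    linarith

lemma pr_congr (hp : IsProb p) {S T : Set Ω} (h : ∀ ω, 0 < p ω → (ω ∈ S ↔ ω ∈ T)) :
    Pr p S = Pr p T := by
  rw [pr_ind, pr_ind]
  refine tsum_congr fun ω => ?_
  by_cases hω : 0 < p ω
  · by_cases hS : ω ∈ S
    · rw [Set.indicator_of_mem hS, Set.indicator_of_mem ((h ω hω).1 hS)]
    · rw [Set.indicator_of_notMem hS, Set.indicator_of_notMem (fun hT => hS ((h ω hω).2 hT))]
  · have h0 : p ω = 0 := le_antisymm (not_lt.1 hω) (hp.1 ω)
    by_cases hS : ω ∈ S <;> by_cases hT : ω ∈ T <;>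
      simp [Set.indicator_of_mem, Set.indicator_of_notMem, hS, hT, h0]

lemma exists_pos (hp : IsProb p) : ∃ ω, 0 < p ω := by
  have : 0 < Pr p (Set.univ : Set Ω) := by rw [hp.2]; norm_num
  obtain ⟨ω, _, hω⟩ := (pr_pos_iff hp).1 this
  exact ⟨ω, hω⟩

lemma mem_supp_of_pos {α : Type} (hp : IsProb p) {X : Ω → α} {ω : Ω} (hω : 0 < p ω) :
    X ω ∈ supp p X := (pr_pos_iff hp).2 ⟨ω, rfl, hω⟩

lemma supp_witness {α : Type} (hp : IsProb p) {X : Ω → α} {a : α} (ha : a ∈ supp p X) :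
    ∃ ω, 0 < p ω ∧ X ω = a := by
  obtain ⟨ω, hωS, hω⟩ := (pr_pos_iff hp).1 ha
  exact ⟨ω, hω, hωS⟩

lemma funcOf_iff {α β : Type} (hp : IsProb p) {X : Ω → α} {Y : Ω → β} :
    FuncOf p X Y ↔ ∃ f : β → α, ∀ ω, 0 < p ω → X ω = f (Y ω) := by
  constructor
  · rintro ⟨f, hf⟩; exact ⟨f, fun ω hω => (pr_one_iff hp).1 hf ω hω⟩
  · rintro ⟨f, hf⟩; exact ⟨f, (pr_one_iff hp).2 hf⟩

lemma funcOf_of_unique {α β : Type} (hp : IsProb p) (X : Ω → α) (Y : Ω → β)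
    (h : ∀ ω ω', 0 < p ω → 0 < p ω' → Y ω = Y ω' → X ω = X ω') : FuncOf p X Y := by
  obtain ⟨ω0, hω0⟩ := exists_pos hp
  refine (funcOf_iff hp).2 ⟨fun b => if hb : ∃ ω, 0 < p ω ∧ Y ω = b then X hb.choose else X ω0,
    fun ω hω => ?_⟩
  have hb : ∃ ω', 0 < p ω' ∧ Y ω' = Y ω := ⟨ω, hω, rfl⟩
  beta_reduce
  rw [dif_pos hb]
  exact h ω hb.choose hω hb.choose_spec.1 hb.choose_spec.2.symm

lemma pr_fiber_sum {β : Type} (hp : IsProb p) (S : Set Ω) (Y : Ω → β) (F : Finset β)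
    (h : ∀ ω, 0 < p ω → ω ∈ S → Y ω ∈ F) :
    Pr p S = ∑ b ∈ F, Pr p (S ∩ {ω | Y ω = b}) := by
  induction F using Finset.induction generalizing S with
  | empty =>
    simp only [Finset.sum_empty]
    exact pr_eq_zero hp fun ω hω => by
      by_contra hne
      exact absurd (h ω (lt_of_le_of_ne (hp.1 ω) (Ne.symm hne)) hω) (Finset.notMem_empty _)
  | @insert b F hbF ih =>
    have hsplit : Pr p S = Pr p (S ∩ {ω | Y ω = b}) + Pr p (S ∩ {ω | Y ω ≠ b}) := by
      rw [← pr_union hp]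
      · exact pr_congr hp fun ω _ => by
          constructor
          · intro hω; by_cases hY : Y ω = b
            · exact Or.inl ⟨hω, hY⟩
            · exact Or.inr ⟨hω, hY⟩
          · rintro (⟨hω, _⟩ | ⟨hω, _⟩) <;> exact hω
      · exact Set.disjoint_left.2 fun ω ⟨_, h1⟩ ⟨_, h2⟩ => h2 h1
    rw [Finset.sum_insert hbF, hsplit]
    congr 1
    rw [ih (S ∩ {ω | Y ω ≠ b}) (fun ω hω hωS =>
      (Finset.mem_insert.1 (h ω hω hωS.1)).resolve_left hωS.2)]
    refine Finset.sum_congr rfl fun c hc => pr_congr hp fun ω _ => ?_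
    constructor
    · rintro ⟨⟨hS, _⟩, hY⟩; exact ⟨hS, hY⟩
    · rintro ⟨hS, hY⟩
      exact ⟨⟨hS, fun hb' => hbF (by have hY' : Y ω = c := hY; rw [hb'] at hY'; exact hY'.symm ▸ hc)⟩, hY⟩

end Infra


section Unif
variable {Ω : Type} {p : Ω → ℝ}

lemma indep_symm {α β : Type} (hp : IsProb p) {X : Ω → α} {Y : Ω → β}
    (h : IndepRV p X Y) : IndepRV p Y X := fun b a => by
  rw [mul_comm, ← h a b]
  exact pr_congr hp fun ω _ => and_comm

lemma mem_supp_iff {α : Type} {X : Ω → α} {a : α} :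
    a ∈ supp p X ↔ 0 < Pr p {ω | X ω = a} := Iff.rfl

lemma pair_pos {α β : Type} (hp : IsProb p) {X : Ω → α} {Y : Ω → β} (h : IndepRV p X Y)
    {a : α} {b : β} (ha : a ∈ supp p X) (hb : b ∈ supp p Y) :
    0 < Pr p {ω | X ω = a ∧ Y ω = b} := by
  rw [h]
  exact mul_pos (mem_supp_iff.1 ha) (mem_supp_iff.1 hb)

lemma pair_witness {α β : Type} (hp : IsProb p) {X : Ω → α} {Y : Ω → β} (h : IndepRV p X Y)
    {a : α} {b : β} (ha : a ∈ supp p X) (hb : b ∈ supp p Y) :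
    ∃ ω, 0 < p ω ∧ X ω = a ∧ Y ω = b := by
  obtain ⟨ω, hωS, hω⟩ := (pr_pos_iff hp).1 (pair_pos hp h ha hb)
  exact ⟨ω, hω, hωS⟩

lemma aux_inj {α β γ : Type} (hp : IsProb p) {X : Ω → α} {Y : Ω → β} {Z : Ω → γ}
    (hXY : IndepRV p X Y)
    (f : α → β → γ) (hf : ∀ ω, 0 < p ω → Z ω = f (X ω) (Y ω))
    (g : β → γ → α) (hg : ∀ ω, 0 < p ω → X ω = g (Y ω) (Z ω)) :
    ∀ a ∈ supp p X, ∀ a' ∈ supp p X, ∀ b ∈ supp p Y, f a b = f a' b → a = a' := by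
  intro a ha a' ha' b hb hff
  obtain ⟨ω1, hω1, hX1, hY1⟩ := pair_witness hp hXY ha hb
  obtain ⟨ω2, hω2, hX2, hY2⟩ := pair_witness hp hXY ha' hb
  have hZ1 : Z ω1 = f a b := by rw [hf ω1 hω1, hX1, hY1]
  have hZ2 : Z ω2 = f a b := by rw [hf ω2 hω2, hX2, hY2, ← hff]
  have e1 : a = g b (f a b) := by rw [← hZ1, ← hX1, ← hY1]; exact hg ω1 hω1
  have e2 : a' = g b (f a b) := by rw [← hZ2, ← hX2, ← hY2]; exact hg ω2 hω2
  rw [e1, e2]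

lemma aux_unif {α β γ : Type} (hp : IsProb p) {X : Ω → α} {Y : Ω → β} {Z : Ω → γ}
    (hXY : IndepRV p X Y) (hYZ : IndepRV p Y Z)
    (f : α → β → γ) (hf : ∀ ω, 0 < p ω → Z ω = f (X ω) (Y ω))
    (g : β → γ → α) (hg : ∀ ω, 0 < p ω → X ω = g (Y ω) (Z ω))
    (hXfin : (supp p X).Finite) :
    ∀ a ∈ supp p X, ∀ b ∈ supp p Y,
      f a b ∈ supp p Z ∧ Pr p {ω | Z ω = f a b} = Pr p {ω | X ω = a} := by
  intro a ha b hb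
  obtain ⟨ω1, hω1, hX1, hY1⟩ := pair_witness hp hXY ha hb
  have hZ1 : Z ω1 = f a b := by rw [hf ω1 hω1, hX1, hY1]
  have memZ : f a b ∈ supp p Z := hZ1 ▸ mem_supp_of_pos hp hω1
  refine ⟨memZ, ?_⟩
  set c := f a b with hc
  -- decomposition over a'
  have hdec : Pr p {ω | Y ω = b ∧ Z ω = c} =
      ∑ a' ∈ hXfin.toFinset, Pr p ({ω | Y ω = b ∧ Z ω = c} ∩ {ω | X ω = a'}) :=
    pr_fiber_sum hp _ X _ (fun ω hω _ => hXfin.mem_toFinset.2 (mem_supp_of_pos hp hω))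
  have hterm : ∀ a' ∈ hXfin.toFinset,
      Pr p ({ω | Y ω = b ∧ Z ω = c} ∩ {ω | X ω = a'}) =
      if f a' b = c then Pr p {ω | X ω = a' ∧ Y ω = b} else 0 := by
    intro a' _
    by_cases hcase : f a' b = c
    · rw [if_pos hcase]
      refine pr_congr hp fun ω hω => ?_
      constructor
      · rintro ⟨⟨hY, hZ⟩, hX⟩; exact ⟨hX, hY⟩
      · rintro ⟨hX, hY⟩
        refine ⟨⟨hY, ?_⟩, hX⟩
        rw [hf ω hω, hX, hY, hcase]
    · rw [if_neg hcase]
      refine pr_eq_zero hp fun ω hω => ?_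
      by_contra hne
      have hωpos : 0 < p ω := lt_of_le_of_ne (hp.1 ω) (Ne.symm hne)
      obtain ⟨⟨hY, hZ⟩, hX⟩ := hω
      exact hcase (by rw [← hX, ← hY, ← hf ω hωpos, hZ])
  have hsum : Pr p {ω | Y ω = b} * Pr p {ω | Z ω = c} =
      ∑ a' ∈ hXfin.toFinset, (if f a' b = c then Pr p {ω | X ω = a'} * Pr p {ω | Y ω = b} else 0) := by
    rw [← hYZ b c, hdec]
    exact Finset.sum_congr rfl fun a' ha' => by rw [hterm a' ha', hXY a' b]
  have hsum2 : ∀ a' ∈ hXfin.toFinset, (if f a' b = c then Pr p {ω | X ω = a'} * Pr p {ω | Y ω = b} else 0)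
      = (if a' = a then Pr p {ω | X ω = a'} * Pr p {ω | Y ω = b} else 0) := by
    intro a' ha'
    by_cases he : a' = a
    · subst he; rw [if_pos hc.symm, if_pos rfl]
    · rw [if_neg he, if_neg fun hfe => he
        (aux_inj hp hXY f hf g hg a' (hXfin.mem_toFinset.1 ha') a ha b hb (hc ▸ hfe))]
  rw [Finset.sum_congr rfl hsum2, Finset.sum_ite_eq' hXfin.toFinset a
      (fun a' => Pr p {ω | X ω = a'} * Pr p {ω | Y ω = b}),
      if_pos (hXfin.mem_toFinset.2 ha)] at hsum
  have hbpos : 0 < Pr p {ω | Y ω = b} := mem_supp_iff.1 hb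
  have := hsum
  exact mul_left_cancel₀ hbpos.ne' (by rw [this, mul_comm])

lemma tri_uniform {α β γ : Type} (hp : IsProb p) {X : Ω → α} {Y : Ω → β} {Z : Ω → γ}
    (ht : tri p X Y Z) (hXfin : (supp p X).Finite) (hYfin : (supp p Y).Finite)
    (hZfin : (supp p Z).Finite) {q : ℕ}
    (hqX : (supp p X).ncard = q) (hqY : (supp p Y).ncard = q) (hqZ : (supp p Z).ncard = q) :
    (∀ a ∈ supp p X, Pr p {ω | X ω = a} = 1 / q) ∧
    (∀ b ∈ supp p Y, Pr p {ω | Y ω = b} = 1 / q) ∧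
    (∀ c ∈ supp p Z, Pr p {ω | Z ω = c} = 1 / q) := by
  obtain ⟨hXf, hYf, hZf, hXY, hXZ, hYZ⟩ := ht
  obtain ⟨fZ, hfZ⟩ := (funcOf_iff hp).1 hZf
  obtain ⟨gX, hgX⟩ := (funcOf_iff hp).1 hXf
  obtain ⟨gY, hgY⟩ := (funcOf_iff hp).1 hYf
  set f : α → β → γ := fun a b => fZ (a, b) with hfdef
  have hf : ∀ ω, 0 < p ω → Z ω = f (X ω) (Y ω) := fun ω hω => hfZ ω hω
  have hg : ∀ ω, 0 < p ω → X ω = (fun b c => gX (b, c)) (Y ω) (Z ω) := fun ω hω => hgX ω hω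
  have hg' : ∀ ω, 0 < p ω → Y ω = (fun a c => gY (a, c)) (X ω) (Z ω) := fun ω hω => hgY ω hω
  have h1 := aux_unif hp hXY hYZ f hf (fun b c => gX (b, c)) hg hXfin
  have h2 := aux_unif hp (indep_symm hp hXY) hXZ (fun b a => f a b)
      (fun ω hω => hf ω hω) (fun a c => gY (a, c)) hg' hYfin
  obtain ⟨ω0, hω0⟩ := exists_pos hp
  have ha0 : X ω0 ∈ supp p X := mem_supp_of_pos hp hω0
  have hb0 : Y ω0 ∈ supp p Y := mem_supp_of_pos hp hω0
  have hXYeq : ∀ a ∈ supp p X, ∀ b ∈ supp p Y,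
      Pr p {ω | X ω = a} = Pr p {ω | Y ω = b} := by
    intro a ha b hb
    rw [← (h1 a ha b hb).2, ← (h2 b hb a ha).2]
  have hcard : hXfin.toFinset.card = q := by
    rw [← Set.ncard_eq_toFinset_card _ hXfin, hqX]
  have hq0 : 0 < q := by
    rw [← hqX]; exact (Set.ncard_pos hXfin).2 ⟨_, ha0⟩
  have hsum1 : (1:ℝ) = ∑ a ∈ hXfin.toFinset, Pr p {ω | X ω = a} := by
    rw [← hp.2, pr_fiber_sum hp Set.univ X hXfin.toFinset
      (fun ω hω _ => hXfin.mem_toFinset.2 (mem_supp_of_pos hp hω))]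
    exact Finset.sum_congr rfl fun a _ => pr_congr hp fun ω _ => by simp
  have hval : ∀ a ∈ supp p X, Pr p {ω | X ω = a} = 1 / q := by
    intro a ha
    have hconst : ∀ a' ∈ hXfin.toFinset, Pr p {ω | X ω = a'} = Pr p {ω | X ω = a} := by
      intro a' ha'
      rw [hXYeq a' (hXfin.mem_toFinset.1 ha') (Y ω0) hb0, ← hXYeq a ha (Y ω0) hb0]
    rw [Finset.sum_congr rfl hconst, Finset.sum_const, hcard, nsmul_eq_mul] at hsum1
    have hqne : (q:ℝ) ≠ 0 := Nat.cast_ne_zero.2 hq0.ne'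
    field_simp
    linarith [hsum1]
  refine ⟨hval, fun b hb => ?_, fun c hc => ?_⟩
  · rw [← hXYeq (X ω0) ha0 b hb]; exact hval _ ha0
  · have hinj : Set.InjOn (fun a => f a (Y ω0)) hXfin.toFinset := by
      intro a ha a' ha' hfe
      exact aux_inj hp hXY f hf (fun b c => gX (b, c)) hg a (hXfin.mem_toFinset.1 ha) a'
        (hXfin.mem_toFinset.1 ha') (Y ω0) hb0 hfe
    have himg : hXfin.toFinset.image (fun a => f a (Y ω0)) = hZfin.toFinset := by
      apply Finset.eq_of_subset_of_card_le
      · intro c' hc'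
        obtain ⟨a, ha, rfl⟩ := Finset.mem_image.1 hc'
        exact hZfin.mem_toFinset.2 (h1 a (hXfin.mem_toFinset.1 ha) (Y ω0) hb0).1
      · rw [Finset.card_image_of_injOn hinj, hcard, ← Set.ncard_eq_toFinset_card _ hZfin, hqZ]
    have hcmem : c ∈ hXfin.toFinset.image (fun a => f a (Y ω0)) :=
      himg ▸ hZfin.mem_toFinset.2 hc
    obtain ⟨a, ha, hfa⟩ := Finset.mem_image.1 hcmem
    rw [← hfa]
    rw [(h1 a (hXfin.mem_toFinset.1 ha) (Y ω0) hb0).2]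
    exact hval a (hXfin.mem_toFinset.1 ha)

end Unif

/-- the `chk_12` subnetwork: let `{A_i}_{i∈E}` satisfy the Fano-non-Fano
condition, each with support of cardinality `q`, and let `U` be a random variable of
cardinality at most `q`. Then
`A_1 ≤ι (A_2, U) ∧ A_2 ≤ι (A_1, U) ∧ A_3 ≤ι (A_123, U)` holds if and only if
`U ≐ A_12`, i.e. `U ≤ι A_12` and `A_12 ≤ι U`. -/
theorem chk12_iff {Ω : Type} (p : Ω → ℝ) (hp : IsProb p)
    {α : Fin 7 → Type} (A : ∀ i, Ω → α i) (hfin : ∀ i, (supp p (A i)).Finite)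
    (hfnf : fnf p A) (q : ℕ)
    (hq : ∀ i, (supp p (A i)).ncard = q)
    {β : Type} (U : Ω → β) (hUfin : (supp p U).Finite)
    (hUcard : (supp p U).ncard ≤ q) :
    (FuncOf p (A 0) (fun ω => (A 1 ω, U ω)) ∧
      FuncOf p (A 1) (fun ω => (A 0 ω, U ω)) ∧
      FuncOf p (A 2) (fun ω => (A 6 ω, U ω))) ↔
    (FuncOf p U (A 3) ∧ FuncOf p (A 3) U) := by
  have t013 : tri p (A 0) (A 1) (A 3) := hfnf.1 0 1 3 (by unfold inDN; decide)
  have t236 : tri p (A 2) (A 3) (A 6) := hfnf.1 2 3 6 (by unfold inDN; decide)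
  have i012 : Indep3 p (A 0) (A 1) (A 2) := hfnf.2 0 1 2 (by unfold inIF inDF inDN; decide)
  have i01 : IndepRV p (A 0) (A 1) := t013.2.2.2.1
  have i03 : IndepRV p (A 0) (A 3) := t013.2.2.2.2.1
  have i26 : IndepRV p (A 2) (A 6) := t236.2.2.2.2.1
  obtain ⟨ω0, hω0⟩ := exists_pos hp
  have hq0 : 0 < q := by
    rw [← hq 0]; exact (Set.ncard_pos (hfin 0)).2 ⟨_, mem_supp_of_pos hp hω0⟩
  obtain ⟨f12p, hf12p⟩ := (funcOf_iff hp).1 t013.2.2.1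
  have hf12 : ∀ ω, 0 < p ω → A 3 ω = f12p (A 0 ω, A 1 ω) := hf12p
  obtain ⟨kp, hkp⟩ := (funcOf_iff hp).1 t236.2.2.1
  have hk : ∀ ω, 0 < p ω → A 6 ω = kp (A 2 ω, A 3 ω) := hkp
  have trip_pos : ∀ (a : α 0) (b : α 1) (c : α 2), a ∈ supp p (A 0) → b ∈ supp p (A 1) →
      c ∈ supp p (A 2) → 0 < Pr p {ω | A 0 ω = a ∧ A 1 ω = b ∧ A 2 ω = c} := by
    intro a b c ha hb hc
    have e3 : Pr p {ω | (A 0 ω, A 1 ω) = (a, b) ∧ A 2 ω = c}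
        = Pr p {ω | (A 0 ω, A 1 ω) = (a, b)} * Pr p {ω | A 2 ω = c} := i012.2 (a, b) c
    have e1 : Pr p {ω | A 0 ω = a ∧ A 1 ω = b ∧ A 2 ω = c}
        = Pr p {ω | (A 0 ω, A 1 ω) = (a, b) ∧ A 2 ω = c} :=
      pr_congr hp fun ω _ => by simp only [Set.mem_setOf_eq, Prod.mk.injEq, and_assoc]
    have e2 : Pr p {ω | (A 0 ω, A 1 ω) = (a, b)} = Pr p {ω | A 0 ω = a ∧ A 1 ω = b} :=
      pr_congr hp fun ω _ => by simp only [Set.mem_setOf_eq, Prod.mk.injEq]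
    rw [e1, e3, e2]
    exact mul_pos (pair_pos hp i01 ha hb) (mem_supp_iff.1 hc)
  constructor
  · rintro ⟨h1, h2, h3⟩
    obtain ⟨g2p, hg2p⟩ := (funcOf_iff hp).1 h2
    have hg2 : ∀ ω, 0 < p ω → A 1 ω = g2p (A 0 ω, U ω) := hg2p
    obtain ⟨g3p, hg3p⟩ := (funcOf_iff hp).1 h3
    have hg3 : ∀ ω, 0 < p ω → A 2 ω = g3p (A 6 ω, U ω) := hg3p
    have hSUcard : hUfin.toFinset.card ≤ q := by
      rw [← Set.ncard_eq_toFinset_card _ hUfin]; exact hUcard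
    -- Step 1 : U is a function of (A 0, A 1)
    have step1 : FuncOf p U (fun ω => (A 0 ω, A 1 ω)) := by
      apply funcOf_of_unique hp
      intro ω ω' hω hω' heq
      have heq' : (A 0 ω, A 1 ω) = (A 0 ω', A 1 ω') := heq
      rw [Prod.mk.injEq] at heq'
      obtain ⟨e0, e1'⟩ := heq'
      by_contra hne
      set M : β → Finset (α 0 × α 1) := fun u =>
        ((hfin 0).toFinset ×ˢ (hfin 1).toFinset).filter
          (fun ab => 0 < Pr p {ω'' | A 0 ω'' = ab.1 ∧ A 1 ω'' = ab.2 ∧ U ω'' = u}) with hM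
      have hMmem : ∀ u ab, ab ∈ M u ↔ (ab ∈ (hfin 0).toFinset ×ˢ (hfin 1).toFinset ∧
          0 < Pr p {ω'' | A 0 ω'' = ab.1 ∧ A 1 ω'' = ab.2 ∧ U ω'' = u}) := by
        intro u ab; rw [hM]; exact Finset.mem_filter
      have hMcard : ∀ u, (M u).card ≤ q := by
        intro u
        have hle : (M u).card ≤ (hfin 0).toFinset.card := by
          apply Finset.card_le_card_of_injOn (fun ab => ab.1)
          · intro ab hab
            exact (Finset.mem_product.1 ((hMmem u ab).1 hab).1).1
          · intro ab hab ab' hab' hfst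
            obtain ⟨ω1, hω1mem, hω1⟩ :=
              (pr_pos_iff hp).1 ((hMmem u ab).1 (Finset.mem_coe.1 hab)).2
            obtain ⟨ω2, hω2mem, hω2⟩ :=
              (pr_pos_iff hp).1 ((hMmem u ab').1 (Finset.mem_coe.1 hab')).2
            obtain ⟨ha1, hb1, hu1⟩ := hω1mem
            obtain ⟨ha2, hb2, hu2⟩ := hω2mem
            have hv1 : ab.2 = g2p (ab.1, u) := by rw [← ha1, ← hb1, ← hu1]; exact hg2 ω1 hω1
            have hv2 : ab'.2 = g2p (ab'.1, u) := by rw [← ha2, ← hb2, ← hu2]; exact hg2 ω2 hω2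
            have hfst' : ab.1 = ab'.1 := hfst
            exact Prod.ext hfst' (by rw [hv1, hv2, hfst'])
        rwa [← Set.ncard_eq_toFinset_card _ (hfin 0), hq 0] at hle
      have hmemMuv : ∀ (ωa : Ω), 0 < p ωa → (A 0 ωa, A 1 ωa) ∈ M (U ωa) := by
        intro ωa hωa
        refine (hMmem _ _).2 ⟨Finset.mem_product.2
          ⟨(hfin 0).mem_toFinset.2 (mem_supp_of_pos hp hωa),
           (hfin 1).mem_toFinset.2 (mem_supp_of_pos hp hωa)⟩, ?_⟩
        exact (pr_pos_iff hp).2 ⟨ωa, ⟨rfl, rfl, rfl⟩, hωa⟩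
      have hcover : ∀ ab ∈ (hfin 0).toFinset ×ˢ (hfin 1).toFinset, ∃ u ∈ hUfin.toFinset, ab ∈ M u := by
        rintro ⟨a1, b1⟩ hab
        obtain ⟨hab0, hab1⟩ := Finset.mem_product.1 hab
        obtain ⟨ωa, hωa, hA0, hA1⟩ := pair_witness hp i01 ((hfin 0).mem_toFinset.1 hab0)
          ((hfin 1).mem_toFinset.1 hab1)
        refine ⟨U ωa, hUfin.mem_toFinset.2 (mem_supp_of_pos hp hωa), ?_⟩
        have hmm := hmemMuv ωa hωa
        rw [hA0, hA1] at hmm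
        exact hmm
      have hmem1 : (A 0 ω, A 1 ω) ∈ M (U ω) := hmemMuv ω hω
      have hmem2 : (A 0 ω, A 1 ω) ∈ M (U ω') := by
        have hmm := hmemMuv ω' hω'
        rw [← e0, ← e1'] at hmm
        exact hmm
      have hUω'SU : U ω' ∈ hUfin.toFinset := hUfin.mem_toFinset.2 (mem_supp_of_pos hp hω')
      have hUωSU : U ω ∈ hUfin.toFinset := hUfin.mem_toFinset.2 (mem_supp_of_pos hp hω)
      set M' : β → Finset (α 0 × α 1) := fun v =>
        if v = U ω' then (M (U ω')).erase (A 0 ω, A 1 ω) else M v with hM'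
      have hcover' : (hfin 0).toFinset ×ˢ (hfin 1).toFinset ⊆ hUfin.toFinset.biUnion M' := by
        intro ab hab
        obtain ⟨u, huSU, habu⟩ := hcover ab hab
        by_cases hcase : u = U ω'
        · by_cases hab2 : ab = (A 0 ω, A 1 ω)
          · refine Finset.mem_biUnion.2 ⟨U ω, hUωSU, ?_⟩
            simp only [hM', if_neg hne]
            exact hab2 ▸ hmem1
          · refine Finset.mem_biUnion.2 ⟨U ω', hUω'SU, ?_⟩
            simp only [hM', if_pos rfl]
            exact Finset.mem_erase.2 ⟨hab2, hcase ▸ habu⟩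
        · exact Finset.mem_biUnion.2 ⟨u, huSU, by simp only [hM', if_neg hcase]; exact habu⟩
      have c1 : ((hfin 0).toFinset ×ˢ (hfin 1).toFinset).card = q * q := by
        rw [Finset.card_product, ← Set.ncard_eq_toFinset_card _ (hfin 0),
          ← Set.ncard_eq_toFinset_card _ (hfin 1), hq 0, hq 1]
      have c2 := Finset.card_le_card hcover'
      have c3 : (hUfin.toFinset.biUnion M').card ≤ ∑ v ∈ hUfin.toFinset, (M' v).card :=
        Finset.card_biUnion_le
      have c4 : ∑ v ∈ hUfin.toFinset, (M' v).card
          = (M' (U ω')).card + ∑ v ∈ hUfin.toFinset.erase (U ω'), (M' v).card :=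
        (Finset.add_sum_erase _ _ hUω'SU).symm
      have c5 : (M' (U ω')).card ≤ q - 1 := by
        simp only [hM', if_pos rfl]
        rw [Finset.card_erase_of_mem hmem2]
        exact Nat.sub_le_sub_right (hMcard _) 1
      have c6 : ∑ v ∈ hUfin.toFinset.erase (U ω'), (M' v).card ≤ (q - 1) * q := by
        have hb := Finset.sum_le_card_nsmul (hUfin.toFinset.erase (U ω')) (fun v => (M' v).card) q
          (fun v hv => by
            simp only [hM', if_neg (Finset.mem_erase.1 hv).1]
            exact hMcard v)
        rw [Finset.card_erase_of_mem hUω'SU, smul_eq_mul] at hb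
        exact hb.trans (Nat.mul_le_mul_right _ (Nat.sub_le_sub_right hSUcard 1))
      have hfinal : q * q ≤ (q - 1) + (q - 1) * q := by
        calc q * q = ((hfin 0).toFinset ×ˢ (hfin 1).toFinset).card := c1.symm
          _ ≤ (hUfin.toFinset.biUnion M').card := c2
          _ ≤ ∑ v ∈ hUfin.toFinset, (M' v).card := c3
          _ = (M' (U ω')).card + ∑ v ∈ hUfin.toFinset.erase (U ω'), (M' v).card := c4
          _ ≤ (q - 1) + (q - 1) * q := Nat.add_le_add c5 c6
      obtain ⟨r, rfl⟩ : ∃ r, q = r + 1 := ⟨q - 1, (Nat.succ_pred_eq_of_pos hq0).symm⟩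
      simp only [Nat.add_sub_cancel] at hfinal
      nlinarith [hfinal]
    obtain ⟨φ, hφp⟩ := (funcOf_iff hp).1 step1
    have hφ : ∀ ω, 0 < p ω → U ω = φ (A 0 ω, A 1 ω) := hφp
    -- Step 2 : U is a function of (A 2, A 6)
    have step2 : FuncOf p U (fun ω => (A 2 ω, A 6 ω)) := by
      apply funcOf_of_unique hp
      intro ω ω' hω hω' heq
      have heq' : (A 2 ω, A 6 ω) = (A 2 ω', A 6 ω') := heq
      rw [Prod.mk.injEq] at heq'
      obtain ⟨e2', e6'⟩ := heq'
      have hcmem : A 6 ω ∈ supp p (A 6) := mem_supp_of_pos hp hω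
      set T : Finset β := hUfin.toFinset.filter
        (fun v => 0 < Pr p {ω'' | A 6 ω'' = A 6 ω ∧ U ω'' = v}) with hT
      have hmemT : ∀ ωa, 0 < p ωa → A 6 ωa = A 6 ω → U ωa ∈ T := by
        intro ωa hωa h6
        rw [hT]
        exact Finset.mem_filter.2 ⟨hUfin.mem_toFinset.2 (mem_supp_of_pos hp hωa),
          (pr_pos_iff hp).2 ⟨ωa, ⟨h6, rfl⟩, hωa⟩⟩
      have hTsub : (hfin 2).toFinset ⊆ T.image (fun v => g3p (A 6 ω, v)) := by
        intro a ha
        obtain ⟨ωa, hωa, hA2, hA6⟩ := pair_witness hp i26 ((hfin 2).mem_toFinset.1 ha) hcmem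
        refine Finset.mem_image.2 ⟨U ωa, hmemT ωa hωa hA6, ?_⟩
        show g3p (A 6 ω, U ωa) = a
        rw [← hA6, ← hA2]
        exact (hg3 ωa hωa).symm
      have hq2card : (hfin 2).toFinset.card = q := by
        rw [← Set.ncard_eq_toFinset_card _ (hfin 2), hq 2]
      have hTcard : T.card ≤ q :=
        le_trans (Finset.card_le_card (by rw [hT]; exact Finset.filter_subset _ _)) hSUcard
      have himgcard : (T.image (fun v => g3p (A 6 ω, v))).card = T.card := by
        have hi1 : q ≤ (T.image (fun v => g3p (A 6 ω, v))).card :=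
          hq2card ▸ Finset.card_le_card hTsub
        have hi2 : (T.image (fun v => g3p (A 6 ω, v))).card ≤ T.card := Finset.card_image_le
        omega
      have hinj : Set.InjOn (fun v => g3p (A 6 ω, v)) T := Finset.card_image_iff.1 himgcard
      have hval : ∀ ωa, 0 < p ωa → A 6 ωa = A 6 ω → g3p (A 6 ω, U ωa) = A 2 ωa := by
        intro ωa hωa h6
        rw [← h6]
        exact (hg3 ωa hωa).symm
      have hu1 : U ω ∈ T := hmemT ω hω rfl
      have hu2 : U ω' ∈ T := hmemT ω' hω' e6'.symm
      have := hinj (Finset.mem_coe.2 hu1) (Finset.mem_coe.2 hu2)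
      apply this
      show g3p (A 6 ω, U ω) = g3p (A 6 ω, U ω')
      rw [hval ω hω rfl, hval ω' hω' e6'.symm, e2']
    obtain ⟨ψ, hψp⟩ := (funcOf_iff hp).1 step2
    have hψ : ∀ ω, 0 < p ω → U ω = ψ (A 2 ω, A 6 ω) := hψp
    -- Step 3
    have ha30 : A 2 ω0 ∈ supp p (A 2) := mem_supp_of_pos hp hω0
    set χ : α 3 → β := fun c => ψ (A 2 ω0, kp (A 2 ω0, c)) with hχ
    have claimC : ∀ ω, 0 < p ω → U ω = χ (A 3 ω) := by
      intro ω hω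
      have htp := trip_pos (A 0 ω) (A 1 ω) (A 2 ω0) (mem_supp_of_pos hp hω)
        (mem_supp_of_pos hp hω) ha30
      obtain ⟨ω', hω'mem, hω'⟩ := (pr_pos_iff hp).1 htp
      obtain ⟨e0, e1', e2'⟩ := hω'mem
      have h3eq : A 3 ω' = A 3 ω := by rw [hf12 ω' hω', hf12 ω hω, e0, e1']
      have hUeq : U ω' = U ω := by rw [hφ ω' hω', hφ ω hω, e0, e1']
      have h6eq : A 6 ω' = kp (A 2 ω0, A 3 ω) := by rw [hk ω' hω', e2', h3eq]
      have hfin3 : U ω' = χ (A 3 ω) := by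
        rw [hψ ω' hω', e2', h6eq, hχ]
      rw [← hUeq]
      exact hfin3
    have ha0 : A 0 ω0 ∈ supp p (A 0) := mem_supp_of_pos hp hω0
    have claimD : ∀ c ∈ supp p (A 3), ∀ c' ∈ supp p (A 3), χ c = χ c' → c = c' := by
      intro c hcs c' hcs' hχeq
      obtain ⟨ω1, hω1, h01, h31⟩ := pair_witness hp i03 ha0 hcs
      obtain ⟨ω2, hω2, h02, h32⟩ := pair_witness hp i03 ha0 hcs'
      have hU1 : U ω1 = χ c := by rw [claimC ω1 hω1, h31]
      have hU2 : U ω2 = χ c' := by rw [claimC ω2 hω2, h32]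
      have hUU : U ω1 = U ω2 := by rw [hU1, hU2, hχeq]
      have hb : A 1 ω1 = A 1 ω2 := by
        rw [hg2 ω1 hω1, hg2 ω2 hω2, h01, h02, hUU]
      rw [← h31, ← h32, hf12 ω1 hω1, hf12 ω2 hω2, h01, h02, hb]
    refine ⟨(funcOf_iff hp).2 ⟨χ, claimC⟩, (funcOf_iff hp).2
      ⟨fun u => if h : ∃ c ∈ supp p (A 3), χ c = u then h.choose else A 3 ω0,
        fun ω hω => ?_⟩⟩
    have hex : ∃ c ∈ supp p (A 3), χ c = U ω :=
      ⟨A 3 ω, mem_supp_of_pos hp hω, (claimC ω hω).symm⟩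
    beta_reduce
    rw [dif_pos hex]
    obtain ⟨hc1, hc2⟩ := hex.choose_spec
    exact (claimD _ hc1 _ (mem_supp_of_pos hp hω) (by rw [hc2, claimC ω hω])).symm
  · rintro ⟨hU3, h3U⟩
    obtain ⟨r, hrp⟩ := (funcOf_iff hp).1 h3U
    have hr : ∀ ω, 0 < p ω → A 3 ω = r (U ω) := hrp
    obtain ⟨fa, hfa⟩ := (funcOf_iff hp).1 t013.1
    obtain ⟨fb, hfb⟩ := (funcOf_iff hp).1 t013.2.1
    obtain ⟨fc, hfc⟩ := (funcOf_iff hp).1 t236.1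
    refine ⟨(funcOf_iff hp).2 ⟨fun x => fa (x.1, r x.2), fun ω hω => ?_⟩,
      (funcOf_iff hp).2 ⟨fun x => fb (x.1, r x.2), fun ω hω => ?_⟩,
      (funcOf_iff hp).2 ⟨fun x => fc (r x.2, x.1), fun ω hω => ?_⟩⟩
    · show A 0 ω = fa (A 1 ω, r (U ω))
      rw [← hr ω hω]; exact hfa ω hω
    · show A 1 ω = fb (A 0 ω, r (U ω))
      rw [← hr ω hω]; exact hfb ω hω
    · show A 2 ω = fc (r (U ω), A 6 ω)
      rw [← hr ω hω]; exact hfc ω hω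

end
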